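/- Let m ≥ 0 be an integer, let C ⊆ ℝ^{m+1} be a nonempty open cone (i.e. t·y ∈ C whenever y ∈ C and t > 0), let G : C → ℝ be twice continuously differentiable, and let γ, ξ ∈ ℝ^{m+1}. Suppose h : C → ℝ satisfies h(t·y) = h(y) for all t > 0 and y ∈ C, and that: (i) det(Hess G(y)) = exp(2⟨γ, ∇G(y)⟩ + h(y)) for all y ∈ C; (ii) det(Hess G(t·y)) = t^{−(m+1)} det(Hess G(y)) for all t > 0 and y ∈ C; and (iii) 2·Hess G(y)·y = ξ for all y ∈ C. Then ⟨γ, ξ⟩ = −(m+1). -/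

import Mathlib

open Set

set_option maxHeartbeats 1000000 in
/-- If the symplectic potential `G` of a toric Kähler cone satisfies
`det(Hess G) = exp(2⟨γ, ∇G⟩ + h)` with `h` homogeneous of degree `0`,
`det(Hess G)` homogeneous of degree `−(m+1)`, and `2 (Hess G) y = ξ`,
then `⟨γ, ξ⟩ = −(m+1)`. -/
theorem stmt_6 (m : ℕ) (C : Set (Fin (m + 1) → ℝ)) (hCne : C.Nonempty) (hCopen : IsOpen C)
    (hCcone : ∀ t : ℝ, 0 < t → ∀ y ∈ C, t • y ∈ C)
    (G h : (Fin (m + 1) → ℝ) → ℝ) (γ ξ : Fin (m + 1) → ℝ)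
    (hG : ContDiffOn ℝ 2 G C)
    (gradG : (Fin (m + 1) → ℝ) → (Fin (m + 1) → ℝ))
    (hgrad : ∀ y ∈ C, ∀ i, gradG y i = fderiv ℝ G y (Pi.single i 1))
    (H : (Fin (m + 1) → ℝ) → Matrix (Fin (m + 1)) (Fin (m + 1)) ℝ)
    (hHess : ∀ y ∈ C, ∀ i j,
      H y i j = fderiv ℝ (fun z => fderiv ℝ G z (Pi.single j 1)) y (Pi.single i 1))
    (hhom : ∀ t : ℝ, 0 < t → ∀ y ∈ C, h (t • y) = h y)
    (hi : ∀ y ∈ C, (H y).det = Real.exp (2 * (∑ i, γ i * gradG y i) + h y))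
    (hii : ∀ t : ℝ, 0 < t → ∀ y ∈ C, (H (t • y)).det = (H y).det / t ^ (m + 1))
    (hiii : ∀ y ∈ C, ∀ i, 2 * ∑ j, H y i j * y j = ξ i) :
    ∑ i, γ i * ξ i = -(m + 1) := by
  obtain ⟨y, hy⟩ := hCne
  have hfd : ContDiffOn ℝ 1 (fderiv ℝ G) C :=
    hG.fderiv_of_isOpen hCopen (by norm_num)
  have hDdiff : DifferentiableAt ℝ (fderiv ℝ G) y :=
    (hfd.contDiffAt (hCopen.mem_nhds hy)).differentiableAt (by norm_num)
  set D := fderiv ℝ (fderiv ℝ G) y with hDdef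
  have hD : HasFDerivAt (fderiv ℝ G) D y := hDdiff.hasFDerivAt
  have hG1 : ∀ᶠ z in nhds y, HasFDerivAt G (fderiv ℝ G z) z := by
    filter_upwards [hCopen.mem_nhds hy] with z hz
    exact ((hG.contDiffAt (hCopen.mem_nhds hz)).differentiableAt
      (by norm_num)).hasFDerivAt
  have hsymm : ∀ v w, D v w = D w v :=
    fun v w => second_derivative_symmetric_of_eventually hG1 hD v w
  have hEv : ∀ j : Fin (m+1), HasFDerivAt (fun z => fderiv ℝ G z (Pi.single j 1))
      ((ContinuousLinearMap.apply ℝ ℝ ((Pi.single j 1 : Fin (m+1) → ℝ))).comp D) y := by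
    intro j
    have h0 := ((ContinuousLinearMap.apply ℝ ℝ
      ((Pi.single j 1 : Fin (m+1) → ℝ))).hasFDerivAt).comp y hD
    exact h0
  have hHD : ∀ i j, H y i j = D (Pi.single i 1) (Pi.single j 1) := by
    intro i j
    rw [hHess y hy i j, (hEv j).fderiv]
    rfl
  have hDy : ∀ i, D y (Pi.single i 1) = ξ i / 2 := by
    intro i
    have hyexp : y = ∑ j, y j • (Pi.single j 1 : Fin (m+1) → ℝ) := by
      ext k; simp [Pi.single_apply, mul_comm]
    have e : D y (Pi.single i 1) = ∑ j, y j * D (Pi.single j 1) (Pi.single i 1) := by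
      conv_lhs => rw [hyexp]
      rw [map_sum]
      simp [ContinuousLinearMap.sum_apply]
    rw [e]
    have e2 : ∑ j, y j * D (Pi.single j 1) (Pi.single i 1) = ∑ j, H y i j * y j :=
      Finset.sum_congr rfl fun j _ => by rw [hsymm, ← hHD i j, mul_comm]
    rw [e2]
    have := hiii y hy i
    linarith
  set φ : ℝ → ℝ := fun t => ∑ i, γ i * fderiv ℝ G (t • y) (Pi.single i 1) with hφdef
  have hder1 : HasDerivAt φ (∑ i, γ i * D y (Pi.single i 1)) 1 := by
    apply HasDerivAt.fun_sum
    intro i _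
    have hc : HasDerivAt (fun t : ℝ => t • y) y 1 := by
      simpa using (hasDerivAt_id (1:ℝ)).smul_const y
    have hEv' := hEv i
    rw [show y = (fun t : ℝ => t • y) 1 by simp] at hEv'
    have := HasFDerivAt.comp_hasDerivAt (x := 1) hEv' hc
    simpa using this.const_mul (γ i)
  have hev : ∀ᶠ t in nhds (1:ℝ), φ t = φ 1 - ((m+1:ℝ)/2) * Real.log t := by
    have h1 : ∀ᶠ t in nhds (1:ℝ), (0:ℝ) < t := eventually_gt_nhds one_pos
    have h2 : ∀ᶠ t in nhds (1:ℝ), t • y ∈ C := by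
      have hcont : Continuous (fun t : ℝ => t • y) := continuous_id.smul continuous_const
      have hm : C ∈ nhds ((fun t : ℝ => t • y) 1) := by
        simpa using hCopen.mem_nhds hy
      exact hcont.continuousAt.preimage_mem_nhds hm
    filter_upwards [h1, h2] with t ht hty
    have hgrad1 : ∀ z ∈ C, ∑ i, γ i * gradG z i
        = ∑ i, γ i * fderiv ℝ G z (Pi.single i 1) := fun z hz =>
      Finset.sum_congr rfl fun i _ => by rw [hgrad z hz i]
    have l1 := hi (t • y) hty
    have l2 := hi y hy
    rw [hgrad1 _ hty, hhom t ht y hy] at l1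
    rw [hgrad1 _ hy] at l2
    have l3 := hii t ht y hy
    rw [l1, l2] at l3
    have e1 : Real.exp (2 * φ t + h y) = Real.exp (2 * φ 1 + h y) / t ^ (m+1) := by
      simp only [hφdef, one_smul]
      exact l3
    have ht1 : (0:ℝ) < t ^ (m+1) := pow_pos ht _
    have e2 := congrArg Real.log e1
    rw [Real.log_exp, Real.log_div (Real.exp_ne_zero _) (ne_of_gt ht1),
      Real.log_exp, Real.log_pow] at e2
    push_cast at e2
    linarith
  have hder2 : HasDerivAt φ (-((m+1:ℝ)/2)) 1 := by
    have hl : HasDerivAt Real.log (1:ℝ) 1 := by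
      simpa using Real.hasDerivAt_log (one_ne_zero)
    have hrhs : HasDerivAt (fun t : ℝ => φ 1 - ((m+1:ℝ)/2) * Real.log t)
        (-((m+1:ℝ)/2)) 1 := by
      simpa using ((hl.const_mul ((m+1:ℝ)/2)).const_sub (φ 1))
    exact hrhs.congr_of_eventuallyEq (by filter_upwards [hev] with t ht using ht)
  have huniq := hder1.unique hder2
  have hsum : ∑ i, γ i * D y (Pi.single i 1) = (∑ i, γ i * ξ i) / 2 := by
    rw [Finset.sum_div]
    exact Finset.sum_congr rfl fun i _ => by rw [hDy i]; ring
  rw [hsum] at huniq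
  push_cast at huniq ⊢
  linarith
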